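/- Let n, m, T be positive natural numbers with T ≥ (m+1)n + m. Let A ∈ ℝ^{n×n} and B ∈ ℝ^{n×m} be such that the pair (A,B) is controllable, i.e. the controllability matrix [B, AB, ..., A^{n-1}B] ∈ ℝ^{n×nm} has rank n. Let u : ℕ → ℝ^m be an input sequence and x : ℕ → ℝ^n a state sequence satisfying x(t+1) = A x(t) + B u(t) for all t. If u is persistently exciting of order n+1, i.e. the block-Hankel matrix U_{0,n+1,T} ∈ ℝ^{m(n+1)×(T-n)} with (i,j)-block u(i+j) for 0 ≤ i ≤ n, 0 ≤ j ≤ T-n-1 has full row rank m(n+1), then the stacked matrix [U_{0,1,T}; X_{0,T}] ∈ ℝ^{(m+n)×T}, whose j-th column is (u(j), x(j)) for 0 ≤ j ≤ T-1, has rank n + m. -/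

import Mathlib

open Matrix

private lemma dotProduct_finset_sum {ι q : Type*} [Fintype q] (v : q → ℝ) (s : Finset ι)
    (f : ι → q → ℝ) : v ⬝ᵥ (∑ i ∈ s, f i) = ∑ i ∈ s, v ⬝ᵥ f i := by
  simp only [dotProduct, Finset.sum_apply, Finset.mul_sum]
  exact Finset.sum_comm

private lemma finset_sum_mulVec {ι p q : Type*} [Fintype q] (s : Finset ι)
    (f : ι → Matrix p q ℝ) (v : q → ℝ) :
    (∑ i ∈ s, f i) *ᵥ v = ∑ i ∈ s, f i *ᵥ v := by
  funext j
  simp only [Matrix.mulVec, dotProduct, Matrix.sum_apply, Finset.sum_apply,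
    Finset.sum_mul]
  exact Finset.sum_comm

private lemma matrix_full_rank_iff {p q : Type*} [Fintype p] [Fintype q] (M : Matrix p q ℝ) :
    M.rank = Fintype.card p ↔ ∀ c : p → ℝ, Matrix.vecMul c M = 0 → c = 0 := by
  have h1 : M.rank = Fintype.card p ↔ LinearIndependent ℝ (fun i => M i) := by
    constructor
    · intro h
      rw [M.rank_eq_finrank_span_row] at h
      exact linearIndependent_iff_card_eq_finrank_span.mpr (by rw [Set.finrank]; exact h.symm)
    · intro h
      exact h.rank_matrix
  rw [h1, show (LinearIndependent ℝ fun i => M i) = LinearIndependent ℝ M.row from rfl,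
    ← Matrix.vecMul_injective_iff]
  constructor
  · intro h c hc
    exact h (a₁ := c) (a₂ := 0) (by simpa [Matrix.zero_vecMul] using hc)
  · intro h a b hab
    have h2 : Matrix.vecMul (a - b) M = 0 := by
      rw [Matrix.sub_vecMul]
      rw [show M.vecMul a = M.vecMul b from hab]
      exact sub_self _
    exact sub_eq_zero.mp (h _ h2)

theorem stmt_0 (n m T : ℕ) (hn : 0 < n) (hm : 0 < m) (hT : (m + 1) * n + m ≤ T)
    (A : Matrix (Fin n) (Fin n) ℝ) (B : Matrix (Fin n) (Fin m) ℝ)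
    (hctrb :
      (Matrix.of fun (i : Fin n) (kj : Fin n × Fin m) =>
        (A ^ (kj.1 : ℕ) * B) i kj.2).rank = n)
    (u : ℕ → Fin m → ℝ) (x : ℕ → Fin n → ℝ)
    (hdyn : ∀ t : ℕ, x (t + 1) = A.mulVec (x t) + B.mulVec (u t))
    (hPE :
      (Matrix.of fun (ia : Fin (n + 1) × Fin m) (j : Fin (T - n)) =>
        u ((ia.1 : ℕ) + (j : ℕ)) ia.2).rank = m * (n + 1)) :
    (Matrix.of fun (i : Fin m ⊕ Fin n) (j : Fin T) =>
      Sum.elim (u (j : ℕ)) (x (j : ℕ)) i).rank = n + m := by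
  classical
  have hnT : n ≤ T := le_trans (by nlinarith) hT
  have hcard : n + m = Fintype.card (Fin m ⊕ Fin n) := by simp [Nat.add_comm]
  rw [hcard, matrix_full_rank_iff]
  intro c hc
  set ξ : Fin m → ℝ := fun a => c (Sum.inl a) with hξdef
  set η : Fin n → ℝ := fun b => c (Sum.inr b) with hηdef
  -- pointwise orthogonality relation
  have hrel : ∀ t, t < T → ξ ⬝ᵥ u t + η ⬝ᵥ x t = 0 := by
    intro t ht
    have h0 := congrFun hc ⟨t, ht⟩
    simpa [Matrix.vecMul, dotProduct, Fintype.sum_sum_type, hξdef, hηdef] using h0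
  -- state transition formula
  have hstate : ∀ t k : ℕ, x (t + k) =
      (A ^ k) *ᵥ (x t) + ∑ i ∈ Finset.range k, (A ^ (k - 1 - i) * B) *ᵥ u (t + i) := by
    intro t k
    induction k with
    | zero => simp [Matrix.one_mulVec]
    | succ k ih =>
      have hsum : A *ᵥ (∑ i ∈ Finset.range k, (A ^ (k - 1 - i) * B) *ᵥ u (t + i))
          = ∑ i ∈ Finset.range k, (A ^ (k + 1 - 1 - i) * B) *ᵥ u (t + i) := by
        rw [← Matrix.mulVecLin_apply, map_sum]
        refine Finset.sum_congr rfl fun i hi => ?_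
        have hik := Finset.mem_range.mp hi
        rw [Matrix.mulVecLin_apply, Matrix.mulVec_mulVec, ← Matrix.mul_assoc, ← pow_succ',
          show k - 1 - i + 1 = k + 1 - 1 - i from by omega]
      calc x (t + (k + 1)) = A *ᵥ x (t + k) + B *ᵥ u (t + k) := hdyn (t + k)
        _ = A *ᵥ ((A ^ k) *ᵥ x t)
            + A *ᵥ (∑ i ∈ Finset.range k, (A ^ (k - 1 - i) * B) *ᵥ u (t + i))
            + B *ᵥ u (t + k) := by rw [ih, Matrix.mulVec_add]
        _ = (A ^ (k + 1)) *ᵥ x t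
            + (∑ i ∈ Finset.range k, (A ^ (k + 1 - 1 - i) * B) *ᵥ u (t + i)
              + (A ^ (k + 1 - 1 - k) * B) *ᵥ u (t + k)) := by
            rw [Matrix.mulVec_mulVec, ← pow_succ', hsum,
              show k + 1 - 1 - k = 0 from by omega, pow_zero, Matrix.one_mul, add_assoc]
        _ = (A ^ (k + 1)) *ᵥ x t
            + ∑ i ∈ Finset.range (k + 1), (A ^ (k + 1 - 1 - i) * B) *ᵥ u (t + i) := by
            rw [Finset.sum_range_succ]
  -- Cayley–Hamilton
  have hdim : A.charpoly.natDegree = n := by simp [A.charpoly_natDegree_eq_dim]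
  set p : ℕ → ℝ := fun k => A.charpoly.coeff k with hpdef
  have hCH : ∑ k ∈ Finset.range (n + 1), p k • A ^ k = 0 := by
    have h := A.aeval_self_charpoly
    rwa [Polynomial.aeval_eq_sum_range, hdim] at h
  have hmonic : p n = 1 := by
    have h := A.charpoly_monic.coeff_natDegree
    rwa [hdim] at h
  -- combined row vector
  set r : ℕ → Fin (n + 1) × Fin m → ℝ := fun k ia =>
    if (ia.1 : ℕ) < k then Matrix.vecMul η (A ^ (k - 1 - (ia.1 : ℕ)) * B) ia.2
    else if (ia.1 : ℕ) = k then ξ ia.2 else 0 with hrdef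
  set w : Fin (n + 1) × Fin m → ℝ := fun ia => ∑ k ∈ Finset.range (n + 1), p k * r k ia
    with hwdef
  -- the key per-k identity
  have hrelk : ∀ k, k ≤ n → ∀ j : Fin (T - n),
      (∑ ia : Fin (n + 1) × Fin m, r k ia * u ((ia.1 : ℕ) + (j : ℕ)) ia.2)
        = -(Matrix.vecMul η (A ^ k) ⬝ᵥ x (j : ℕ)) := by
    intro k hk j
    have hjT : (j : ℕ) + k < T := by have := j.2; omega
    set g : ℕ → ℝ := fun i =>
      if i < k then Matrix.vecMul η (A ^ (k - 1 - i) * B) ⬝ᵥ u (i + (j : ℕ))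
      else if i = k then ξ ⬝ᵥ u (i + (j : ℕ)) else 0 with hgdef
    have step1 : (∑ ia : Fin (n + 1) × Fin m, r k ia * u ((ia.1 : ℕ) + (j : ℕ)) ia.2)
        = ∑ i ∈ Finset.range (n + 1), g i := by
      rw [Fintype.sum_prod_type, ← Fin.sum_univ_eq_sum_range]
      refine Finset.sum_congr rfl fun i _ => ?_
      by_cases h1 : (i : ℕ) < k
      · simp [hrdef, hgdef, h1, dotProduct]
      · by_cases h2 : (i : ℕ) = k
        · simp [hrdef, hgdef, h1, h2, dotProduct]
        · simp [hrdef, hgdef, h1, h2]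
    have step2 : ∑ i ∈ Finset.range (n + 1), g i = ∑ i ∈ Finset.range (k + 1), g i := by
      refine (Finset.sum_subset (Finset.range_subset_range.mpr (by omega)) fun i hi hi' => ?_).symm
      have h1 : ¬ i < k := by simp only [Finset.mem_range] at hi hi'; omega
      have h2 : i ≠ k := by simp only [Finset.mem_range] at hi hi'; omega
      simp [hgdef, h1, h2]
    have step3 : ∑ i ∈ Finset.range (k + 1), g i
        = η ⬝ᵥ (∑ i ∈ Finset.range k, (A ^ (k - 1 - i) * B) *ᵥ u ((j : ℕ) + i))
          + ξ ⬝ᵥ u ((j : ℕ) + k) := by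
      rw [Finset.sum_range_succ, dotProduct_finset_sum]
      congr 1
      · refine Finset.sum_congr rfl fun i hi => ?_
        have hik := Finset.mem_range.mp hi
        simp only [hgdef, if_pos hik]
        rw [← Matrix.dotProduct_mulVec, Nat.add_comm i (j : ℕ)]
      · simp [hgdef, Nat.add_comm]
    have hx := hstate (j : ℕ) k
    have hsum_eq : (∑ i ∈ Finset.range k, (A ^ (k - 1 - i) * B) *ᵥ u ((j : ℕ) + i))
        = x ((j : ℕ) + k) - (A ^ k) *ᵥ x (j : ℕ) := by
      rw [hx]; abel
    rw [step1, step2, step3, hsum_eq, dotProduct_sub]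
    have h0 := hrel ((j : ℕ) + k) hjT
    rw [Matrix.dotProduct_mulVec]
    linarith [h0]
  -- w annihilates the Hankel matrix
  have hwH : Matrix.vecMul w (Matrix.of fun (ia : Fin (n + 1) × Fin m) (j : Fin (T - n)) =>
      u ((ia.1 : ℕ) + (j : ℕ)) ia.2) = 0 := by
    funext j
    show (∑ ia : Fin (n + 1) × Fin m, w ia * u ((ia.1 : ℕ) + (j : ℕ)) ia.2) = 0
    have swap : (∑ ia : Fin (n + 1) × Fin m, w ia * u ((ia.1 : ℕ) + (j : ℕ)) ia.2)
        = ∑ k ∈ Finset.range (n + 1),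
            p k * ∑ ia : Fin (n + 1) × Fin m, r k ia * u ((ia.1 : ℕ) + (j : ℕ)) ia.2 := by
      simp only [hwdef, Finset.sum_mul]
      rw [Finset.sum_comm]
      refine Finset.sum_congr rfl fun k _ => ?_
      rw [Finset.mul_sum]
      exact Finset.sum_congr rfl fun ia _ => by ring
    have key : ∀ k ∈ Finset.range (n + 1),
        p k * (∑ ia : Fin (n + 1) × Fin m, r k ia * u ((ia.1 : ℕ) + (j : ℕ)) ia.2)
          = -(η ⬝ᵥ ((p k • A ^ k) *ᵥ x (j : ℕ))) := by
      intro k hk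
      have hk' : k ≤ n := by have := Finset.mem_range.mp hk; omega
      rw [hrelk k hk' j, ← Matrix.dotProduct_mulVec, Matrix.smul_mulVec,
        dotProduct_smul, smul_eq_mul]
      ring
    rw [swap, Finset.sum_congr rfl key]
    have : (∑ k ∈ Finset.range (n + 1), -(η ⬝ᵥ ((p k • A ^ k) *ᵥ x (j : ℕ))))
        = -(η ⬝ᵥ ((∑ k ∈ Finset.range (n + 1), p k • A ^ k) *ᵥ x (j : ℕ))) := by
      rw [finset_sum_mulVec, dotProduct_finset_sum, Finset.sum_neg_distrib]
    rw [this, hCH, Matrix.zero_mulVec, dotProduct_zero, neg_zero]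
  -- w vanishes by persistency of excitation
  have hPE' : (Matrix.of fun (ia : Fin (n + 1) × Fin m) (j : Fin (T - n)) =>
      u ((ia.1 : ℕ) + (j : ℕ)) ia.2).rank = Fintype.card (Fin (n + 1) × Fin m) := by
    rw [hPE]; simp [Nat.mul_comm]
  have hw0 : w = 0 := (matrix_full_rank_iff _).mp hPE' w hwH
  -- extract ξ = 0
  have hξ0 : ∀ a, ξ a = 0 := by
    intro a
    have h0 := congrFun hw0 ((⟨n, by omega⟩ : Fin (n + 1)), a)
    rw [Pi.zero_apply] at h0
    have hval : w ((⟨n, by omega⟩ : Fin (n + 1)), a) = ξ a := by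
      simp only [hwdef]
      rw [Finset.sum_range_succ]
      have h1 : ∀ k ∈ Finset.range n, p k * r k ((⟨n, by omega⟩ : Fin (n + 1)), a) = 0 := by
        intro k hk
        have hk' := Finset.mem_range.mp hk
        simp [hrdef, show ¬ n < k from by omega, show ¬ n = k from by omega]
      rw [Finset.sum_eq_zero h1, zero_add]
      simp [hrdef, hmonic]
    rw [hval] at h0
    exact h0
  -- extract η ᵥ* A^d B = 0 for d < n
  have hB : ∀ d, d < n → Matrix.vecMul η (A ^ d * B) = 0 := by
    intro d
    induction d using Nat.strong_induction_on with
    | _ d IH =>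
      intro hd
      funext a
      have hi : n - 1 - d < n + 1 := by omega
      have h0 := congrFun hw0 ((⟨n - 1 - d, hi⟩ : Fin (n + 1)), a)
      rw [Pi.zero_apply] at h0
      have hval : w ((⟨n - 1 - d, hi⟩ : Fin (n + 1)), a)
          = Matrix.vecMul η (A ^ d * B) a := by
        simp only [hwdef]
        rw [Finset.sum_eq_single n]
        · have hlt : n - 1 - d < n := by omega
          simp [hrdef, hlt, hmonic, show n - 1 - (n - 1 - d) = d from by omega]
        · intro k hk hkn
          have hk' := Finset.mem_range.mp hk
          by_cases h1 : n - 1 - d < k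
          · have he : k - 1 - (n - 1 - d) < d := by omega
            have hz := IH (k - 1 - (n - 1 - d)) he (by omega)
            simp [hrdef, h1, congrFun hz a]
          · by_cases h2 : n - 1 - d = k
            · simp [hrdef, h1, h2, hξ0]
            · simp [hrdef, h1, h2]
        · intro hmem
          exact absurd (Finset.self_mem_range_succ n) hmem
      rw [hval] at h0
      exact h0
  -- conclude η = 0 by controllability
  have hctrb' : (Matrix.of fun (i : Fin n) (kj : Fin n × Fin m) =>
      (A ^ (kj.1 : ℕ) * B) i kj.2).rank = Fintype.card (Fin n) := by simpa using hctrb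
  have hη0 : η = 0 := by
    apply (matrix_full_rank_iff _).mp hctrb' η
    funext kj
    have h0 := congrFun (hB (kj.1 : ℕ) kj.1.2) kj.2
    simpa [Matrix.vecMul, dotProduct] using h0
  funext i
  cases i with
  | inl a => exact hξ0 a
  | inr b => exact congrFun hη0 b
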